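/- Let G be a finite simple graph with vertex set V and edge set E(G), and let p : V → ℝ≥0 be vertex weights with W = Σ_{v∈V} p(v) > 0. Let B = Σ_{{u,v}∈E(G)} p(u)p(v) be the total edge weight, and let B' be any real number with B' ≥ B, B' ≥ (W/2)·max_{v∈V} p(v), and B' > 0. Then G contains an independent set I with |I| ≥ W² / (4B'). -/
import Mathlib

/-- Symmetric product function on `Sym2`. -/
def stmt7.sm {V : Type*} (x : V → ℝ) : Sym2 V → ℝ :=
  Sym2.lift ⟨fun u v => x u * x v, fun u v => mul_comm (x u) (x v)⟩

/-- The multilinear "kept vertices minus surviving edges" functional. -/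
def stmt7.g {V : Type*} [Fintype V] (G : SimpleGraph V) [DecidableRel G.Adj]
    (x : V → ℝ) : ℝ :=
  ∑ v, x v - ∑ e ∈ G.edgeFinset, stmt7.sm x e

namespace stmt7

variable {V : Type*} [Fintype V] [DecidableEq V]
  (G : SimpleGraph V) [DecidableRel G.Adj]

lemma sm_mk (x : V → ℝ) (u v : V) : sm x s(u, v) = x u * x v := rfl

lemma sm_update (x : V → ℝ) (a : V) (t : ℝ) (e : Sym2 V) (he : ¬ e.IsDiag) :
    sm (Function.update x a t) e
      = t * sm (Function.update x a 1) e + (1 - t) * sm (Function.update x a 0) e := by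
  induction e using Sym2.ind with
  | _ u v =>
    rw [Sym2.mk_isDiag_iff] at he
    simp only [sm_mk]
    by_cases hu : u = a <;> by_cases hv : v = a
    · exact absurd (hu.trans hv.symm) he
    · subst hu; simp only [Function.update_self, Function.update_of_ne hv]; ring
    · subst hv; simp only [Function.update_self, Function.update_of_ne hu]; ring
    · simp only [Function.update_of_ne hu, Function.update_of_ne hv]; ring

lemma g_update (x : V → ℝ) (a : V) (t : ℝ) :
    g G (Function.update x a t)
      = t * g G (Function.update x a 1) + (1 - t) * g G (Function.update x a 0) := by
  have hv : ∀ v, Function.update x a t v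
      = t * Function.update x a 1 v + (1 - t) * Function.update x a 0 v := by
    intro v
    rcases eq_or_ne v a with rfl | h
    · simp
    · simp only [Function.update_of_ne h]; ring
  have he : ∀ e ∈ G.edgeFinset, sm (Function.update x a t) e
      = t * sm (Function.update x a 1) e + (1 - t) * sm (Function.update x a 0) e := by
    intro e heE
    refine sm_update x a t e ?_
    rw [SimpleGraph.mem_edgeFinset] at heE
    exact G.not_isDiag_of_mem_edgeSet heE
  unfold g
  rw [Finset.sum_congr rfl fun v _ => hv v, Finset.sum_congr rfl he]
  simp only [Finset.sum_add_distrib, ← Finset.mul_sum]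
  ring

lemma g_step (x : V → ℝ) (a : V) (h0 : 0 ≤ x a) (h1 : x a ≤ 1) :
    g G x ≤ g G (Function.update x a 0) ∨ g G x ≤ g G (Function.update x a 1) := by
  have key : g G x = x a * g G (Function.update x a 1)
      + (1 - x a) * g G (Function.update x a 0) := by
    conv_lhs => rw [← Function.update_eq_self a x]
    exact g_update G x a (x a)
  rcases le_total (g G (Function.update x a 0)) (g G (Function.update x a 1)) with h | h
  · right; rw [key]; nlinarith
  · left; rw [key]; nlinarith

/-- Rounding lemma: we can round coordinates in `T` to `{0,1}` without decreasing `g`. -/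
lemma round (T : Finset V) :
    ∀ x : V → ℝ, (∀ v, 0 ≤ x v ∧ x v ≤ 1) →
      ∃ y : V → ℝ, (∀ v, 0 ≤ y v ∧ y v ≤ 1) ∧ (∀ v ∈ T, y v = 0 ∨ y v = 1) ∧
        (∀ v ∉ T, y v = x v) ∧ g G x ≤ g G y := by
  induction T using Finset.induction_on with
  | empty =>
    intro x hx
    exact ⟨x, hx, by simp, fun v _ => rfl, le_refl _⟩
  | @insert a T ha ih =>
    intro x hx
    obtain h | h := g_step G x a (hx a).1 (hx a).2
    · obtain ⟨y, hy01, hyT, hyout, hgy⟩ := ih (Function.update x a 0) (by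
        intro v
        rcases eq_or_ne v a with rfl | hv
        · simp
        · simpa [Function.update_of_ne hv] using hx v)
      refine ⟨y, hy01, ?_, ?_, le_trans h hgy⟩
      · intro v hv
        rcases Finset.mem_insert.mp hv with rfl | hvT
        · left; rw [hyout v ha]; simp
        · exact hyT v hvT
      · intro v hv
        have hvne : v ≠ a := fun hva => hv (hva ▸ Finset.mem_insert_self a T)
        rw [hyout v (fun h' => hv (Finset.mem_insert_of_mem h')),
          Function.update_of_ne hvne]
    · obtain ⟨y, hy01, hyT, hyout, hgy⟩ := ih (Function.update x a 1) (by
        intro v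
        rcases eq_or_ne v a with rfl | hv
        · simp
        · simpa [Function.update_of_ne hv] using hx v)
      refine ⟨y, hy01, ?_, ?_, le_trans h hgy⟩
      · intro v hv
        rcases Finset.mem_insert.mp hv with rfl | hvT
        · right; rw [hyout v ha]; simp
        · exact hyT v hvT
      · intro v hv
        have hvne : v ≠ a := fun hva => hv (hva ▸ Finset.mem_insert_self a T)
        rw [hyout v (fun h' => hv (Finset.mem_insert_of_mem h')),
          Function.update_of_ne hvne]

/-- Extraction: from a set `S` remove one endpoint per internal edge to get an
independent set of size at least `|S| - e(S)`. -/
lemma extract (S : Finset V) :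
    ∃ I : Finset V, I ⊆ S ∧ (∀ u ∈ I, ∀ v ∈ I, ¬ G.Adj u v) ∧
      (S.card : ℝ) - ((G.edgeFinset.filter (· ∈ S.sym2)).card : ℝ) ≤ I.card := by
  induction S using Finset.strongInductionOn with
  | _ S ih =>
    by_cases h : ∀ u ∈ S, ∀ v ∈ S, ¬ G.Adj u v
    · refine ⟨S, Finset.Subset.refl S, h, ?_⟩
      have : (0 : ℝ) ≤ ((G.edgeFinset.filter (· ∈ S.sym2)).card : ℝ) := Nat.cast_nonneg _
      linarith
    · push_neg at h
      obtain ⟨u, hu, v, hv, hadj⟩ := h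
      obtain ⟨I, hIs, hind, hcard⟩ := ih (S.erase u) (Finset.erase_ssubset hu)
      refine ⟨I, hIs.trans (Finset.erase_subset _ _), hind, ?_⟩
      have hedge : s(u, v) ∈ G.edgeFinset.filter (· ∈ S.sym2) := by
        rw [Finset.mem_filter, SimpleGraph.mem_edgeFinset]
        exact ⟨hadj, Finset.mk_mem_sym2_iff.mpr ⟨hu, hv⟩⟩
      have hsub : G.edgeFinset.filter (· ∈ (S.erase u).sym2)
          ⊆ (G.edgeFinset.filter (· ∈ S.sym2)).erase s(u, v) := by
        intro e he
        rw [Finset.mem_filter] at he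
        obtain ⟨heE, heS⟩ := he
        rw [Finset.mem_sym2_iff] at heS
        rw [Finset.mem_erase, Finset.mem_filter, Finset.mem_sym2_iff]
        refine ⟨?_, heE, fun w hw => Finset.mem_of_mem_erase (heS w hw)⟩
        intro heq
        have : u ∈ S.erase u := heS u (heq ▸ Sym2.mem_mk_left u v)
        exact absurd this (Finset.notMem_erase u S)
      have hcard2 : (G.edgeFinset.filter (· ∈ (S.erase u).sym2)).card
          ≤ (G.edgeFinset.filter (· ∈ S.sym2)).card - 1 := by
        calc (G.edgeFinset.filter (· ∈ (S.erase u).sym2)).card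
            ≤ ((G.edgeFinset.filter (· ∈ S.sym2)).erase s(u, v)).card :=
              Finset.card_le_card hsub
          _ = (G.edgeFinset.filter (· ∈ S.sym2)).card - 1 :=
              Finset.card_erase_of_mem hedge
      have hE1 : 1 ≤ (G.edgeFinset.filter (· ∈ S.sym2)).card :=
        Finset.card_pos.mpr ⟨_, hedge⟩ |>.le.trans (le_refl _) |> fun _ =>
          Finset.card_pos.mpr ⟨_, hedge⟩
      have hS1 : 1 ≤ S.card := Finset.card_pos.mpr ⟨u, hu⟩
      have hSe : (S.erase u).card = S.card - 1 := Finset.card_erase_of_mem hu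
      have hc2 : ((G.edgeFinset.filter (· ∈ (S.erase u).sym2)).card : ℝ)
          ≤ ((G.edgeFinset.filter (· ∈ S.sym2)).card : ℝ) - 1 := by
        rw [← Nat.cast_one, ← Nat.cast_sub hE1]
        exact_mod_cast hcard2
      have hc1 : ((S.erase u).card : ℝ) = (S.card : ℝ) - 1 := by
        rw [hSe, Nat.cast_sub hS1, Nat.cast_one]
      linarith

end stmt7

/-- **weighted probabilistic Turán.** Let `G` be a finite simple graph on
`V` with vertex weights `p : V → ℝ≥0` of total weight `W = ∑ p v > 0`.  Let
`B = ∑_{{u,v}∈E(G)} p u · p v` be the total edge weight and `B'` any real with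
`B' ≥ B`, `B' ≥ (W/2)·max_v p v`, `B' > 0`.  Then `G` contains an independent set `I`
with `|I| ≥ W² / (4B')`. -/
theorem stmt_7 {V : Type*} [Fintype V] [DecidableEq V]
    (G : SimpleGraph V) [DecidableRel G.Adj]
    (p : V → ℝ) (hp : ∀ v, 0 ≤ p v)
    (W : ℝ) (hW : W = ∑ v, p v) (hWpos : 0 < W)
    (B : ℝ)
    (hB : B = ∑ e ∈ G.edgeFinset,
      Sym2.lift ⟨fun u v => p u * p v, fun u v => mul_comm (p u) (p v)⟩ e)
    (B' : ℝ) (hB'B : B ≤ B') (hB'max : ∀ v, (W / 2) * p v ≤ B') (hB'pos : 0 < B') :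
    ∃ I : Finset V, (∀ u ∈ I, ∀ v ∈ I, ¬ G.Adj u v) ∧
      W ^ 2 / (4 * B') ≤ (I.card : ℝ) := by
  classical
  set z : ℝ := W / (2 * B') with hz
  have hzpos : 0 < z := div_pos hWpos (by linarith)
  set x : V → ℝ := fun v => z * p v with hxdef
  have hx : ∀ v, 0 ≤ x v ∧ x v ≤ 1 := by
    intro v
    constructor
    · exact mul_nonneg hzpos.le (hp v)
    · have h := hB'max v
      show z * p v ≤ 1
      rw [hz, div_mul_eq_mul_div, div_le_one (by linarith)]
      nlinarith [hp v]
  -- value of g at x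
  have hsum : ∑ v, x v = z * W := by
    rw [hW, Finset.mul_sum]
  have hesum : ∑ e ∈ G.edgeFinset, stmt7.sm x e = z ^ 2 * B := by
    rw [hB, Finset.mul_sum]
    refine Finset.sum_congr rfl fun e _ => ?_
    induction e using Sym2.ind with
    | _ u v =>
      show x u * x v = z ^ 2 * (p u * p v)
      rw [hxdef]; ring
  have hgx : W ^ 2 / (4 * B') ≤ stmt7.g G x := by
    have h1 : stmt7.g G x = z * W - z ^ 2 * B := by
      rw [stmt7.g, hsum, hesum]
    have h2 : z * W - z ^ 2 * B' = W ^ 2 / (4 * B') := by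
      rw [hz]; field_simp; ring
    have h3 : z ^ 2 * B ≤ z ^ 2 * B' := by nlinarith
    rw [h1, ← h2]; linarith
  -- round
  obtain ⟨y, hy01, hyT, -, hgy⟩ := stmt7.round G Finset.univ x hx
  have hy : ∀ v, y v = 0 ∨ y v = 1 := fun v => hyT v (Finset.mem_univ v)
  set S : Finset V := Finset.univ.filter (fun v => y v = 1) with hS
  have hmemS : ∀ v, v ∈ S ↔ y v = 1 := by
    intro v; rw [hS, Finset.mem_filter]; simp
  -- vertex sum of y equals |S|
  have hvs : ∑ v, y v = (S.card : ℝ) := by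
    rw [hS, Finset.card_filter]
    push_cast
    refine Finset.sum_congr rfl fun v _ => ?_
    rcases hy v with h | h <;> simp [h]
  -- edge sum of y equals number of internal edges
  have hes : ∑ e ∈ G.edgeFinset, stmt7.sm y e
      = ((G.edgeFinset.filter (· ∈ S.sym2)).card : ℝ) := by
    rw [Finset.card_filter]
    push_cast
    refine Finset.sum_congr rfl fun e heE => ?_
    induction e using Sym2.ind with
    | _ u v =>
      have hmem : s(u, v) ∈ S.sym2 ↔ (u ∈ S ∧ v ∈ S) := Finset.mk_mem_sym2_iff
      show y u * y v = if s(u, v) ∈ S.sym2 then (1 : ℝ) else 0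
      rcases hy u with hu | hu <;> rcases hy v with hv | hv <;>
        simp [hu, hv, hmem, hmemS]
  have hgyval : stmt7.g G y
      = (S.card : ℝ) - ((G.edgeFinset.filter (· ∈ S.sym2)).card : ℝ) := by
    rw [stmt7.g, hvs, hes]
  obtain ⟨I, hIS, hind, hIcard⟩ := stmt7.extract G S
  refine ⟨I, hind, ?_⟩
  calc W ^ 2 / (4 * B') ≤ stmt7.g G x := hgx
    _ ≤ stmt7.g G y := hgy
    _ = (S.card : ℝ) - ((G.edgeFinset.filter (· ∈ S.sym2)).card : ℝ) := hgyval
    _ ≤ (I.card : ℝ) := hIcard
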